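/- Suppose v, w ∈ ℝ^n \ {0} and A ∈ GL_n(ℝ) satisfy A(Q_v(ξ,η)) = Q_w(Aξ, Aη) for all ξ, η ∈ ℝ^n. Then there exist c > 0 and an orthogonal matrix T ∈ O(n) such that A = c·T. -/

import Mathlib

open scoped RealInnerProductSpace

noncomputable section

/-- `ℝ^n` with the Euclidean inner product and norm. -/
abbrev E (n : ℕ) : Type := EuclideanSpace ℝ (Fin n)

/-- The symmetric bilinear map `Q_v(ξ,η) = ⟨ξ,η⟩·v − ⟨ξ,v⟩·η − ⟨η,v⟩·ξ`. -/
def Qv {n : ℕ} (v ξ η : E n) : E n := ⟪ξ, η⟫ • v - ⟪ξ, v⟫ • η - ⟪η, v⟫ • ξ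

/-- The bracket `[Q,Q']` of two (symmetric bilinear) maps. -/
def brk {n : ℕ} (Q Q' : E n → E n → E n) (ξ η θ : E n) : E n :=
  (Q ξ (Q' η θ) + Q η (Q' θ ξ) + Q θ (Q' ξ η))
    - (Q' ξ (Q η θ) + Q' η (Q θ ξ) + Q' θ (Q ξ η))

/-- A map `ℝ^n × ℝ^n → ℝ^n` is a symmetric bilinear map. -/
def IsSymmBilin {n : ℕ} (q : E n → E n → E n) : Prop :=
  (∀ ξ η, q ξ η = q η ξ) ∧ ∀ ξ, IsLinearMap ℝ (q ξ)

/-- The standard basis vectors `e_1, …, e_n` of `ℝ^n`. -/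
def stdE (n : ℕ) (i : Fin n) : E n := EuclideanSpace.single i 1

/-- The `i`-th component of `L^Φ_B (A', B')`, where `v = v_i` is the `i`-th column of `B`
and `ω = ω_i` the `i`-th column of `B'`. -/
def LPhiC {n : ℕ} (A' : E n →ₗ[ℝ] E n) (v ω : E n) (ξ η : E n) : E n :=
  A' (Qv v ξ η) - Qv v (A' ξ) η - Qv v ξ (A' η) + Qv ω ξ η

/-- `(q_1,…,q_n)` lies in the kernel of `L^Ψ_B`, where `v i` are the columns of `B`. -/
def KerPsi {n : ℕ} (v : Fin n → E n) (q : Fin n → E n → E n → E n) : Prop :=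
  ∀ i j : Fin n, i < j → ∀ ξ η θ : E n,
    brk (q i) (Qv (v j)) ξ η θ = brk (q j) (Qv (v i)) ξ η θ

/-- `(q_1,…,q_n)` lies in the subspace `W`; `i0` is the index of the first coordinate. -/
def memW {n : ℕ} (i0 : Fin n) (q : Fin n → E n → E n → E n) : Prop :=
  (∀ j, q j (stdE n j) (stdE n j) = 0) ∧
  (∀ i j, ⟪stdE n i, q j (stdE n i) (stdE n i)⟫ + ⟪stdE n j, q i (stdE n j) (stdE n j)⟫ = 0) ∧
  (∀ j, ⟪stdE n i0, q i0 (stdE n j) (stdE n j)⟫ = 0)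


lemma real_inner_self_pos' {n : ℕ} {x : E n} (hx : x ≠ 0) : 0 < ⟪x, x⟫ :=
  real_inner_self_nonneg.lt_of_ne fun h => hx (inner_self_eq_zero.mp h.symm)


/-- Lemma `lemma:commutes`: if `v, w ≠ 0` and the invertible linear map `A`
satisfies `A(Q_v(ξ,η)) = Q_w(Aξ, Aη)` for all `ξ, η`, then `A = c·T` for some `c > 0` and
some orthogonal transformation `T ∈ O(n)`. -/
theorem stmt11 {n : ℕ} (v w : E n) (hv : v ≠ 0) (hw : w ≠ 0)
    (A : E n →ₗ[ℝ] E n) (hA : Function.Bijective A)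
    (h : ∀ ξ η : E n, A (Qv v ξ η) = Qv w (A ξ) (A η)) :
    ∃ c : ℝ, 0 < c ∧ ∃ T : E n ≃ₗᵢ[ℝ] E n, ∀ x, A x = c • T x := by
  have hAv : A v ≠ 0 := fun hz => hv (hA.injective (by simpa using hz))
  have hvv : (0:ℝ) < ⟪v, v⟫ := real_inner_self_pos' hv
  have hAvAv : (0:ℝ) < ⟪A v, A v⟫ := real_inner_self_pos' hAv
  have star : ∀ ξ : E n, (⟪A v, w⟫ - ⟪v, v⟫) • A ξ = ⟪A ξ, A v⟫ • w - ⟪A ξ, w⟫ • A v := by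
    intro ξ
    have hh := h ξ v
    simp only [Qv, map_sub, map_smul] at hh
    linear_combination (norm := module) hh
  obtain ⟨μ, hwpar⟩ : ∃ μ : ℝ, w = μ • A v := by
    have h2 : (2 * ⟪A v, w⟫ - ⟪v, v⟫) • A v = ⟪A v, A v⟫ • w := by
      linear_combination (norm := module) star v
    exact ⟨(⟪A v, A v⟫)⁻¹ * (2 * ⟪A v, w⟫ - ⟪v, v⟫),
      by rw [← smul_smul, h2, inv_smul_smul₀ (ne_of_gt hAvAv)]⟩
  have hμvv : μ * ⟪A v, A v⟫ = ⟪v, v⟫ := by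
    have hs := star v
    rw [hwpar] at hs
    simp only [real_inner_smul_right, smul_smul] at hs
    have hz : (μ * ⟪A v, A v⟫ - ⟪v, v⟫) • A v = 0 := by
      linear_combination (norm := module) hs
    rcases smul_eq_zero.mp hz with h0 | h0
    · linarith
    · exact absurd h0 hAv
  have hμpos : 0 < μ := by
    rcases lt_trichotomy μ 0 with h0 | h0 | h0
    · nlinarith
    · rw [h0, zero_mul] at hμvv; linarith
    · exact h0
  have key : ∀ ξ : E n, ⟪ξ, v⟫ = 0 → ⟪A ξ, A v⟫ = 0 ∧ μ * ⟪A ξ, A ξ⟫ = ⟪ξ, ξ⟫ := by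
    intro ξ hperp
    have hh := h ξ ξ
    simp only [Qv, map_sub, map_smul] at hh
    rw [hwpar] at hh
    have h1 := congrArg (fun z => ⟪A ξ, z⟫) hh
    have h2 := congrArg (fun z => ⟪A v, z⟫) hh
    simp only [inner_sub_right, real_inner_smul_right, hperp] at h1 h2
    have horth : ⟪A ξ, A v⟫ = 0 := by
      rcases eq_or_ne ξ 0 with rfl | hξ0
      · simp
      · have hξξ : (0:ℝ) < ⟪ξ, ξ⟫ := real_inner_self_pos' hξ0
        have hAξξ : (0:ℝ) ≤ ⟪A ξ, A ξ⟫ := real_inner_self_nonneg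
        have hfac : ⟪A ξ, A v⟫ * (⟪ξ, ξ⟫ + μ * ⟪A ξ, A ξ⟫) = 0 := by
          linear_combination h1
        rcases mul_eq_zero.mp hfac with h0 | h0
        · exact h0
        · nlinarith
    refine ⟨horth, ?_⟩
    have : (⟪ξ, ξ⟫ - μ * ⟪A ξ, A ξ⟫) * ⟪A v, A v⟫ = 0 := by
      linear_combination h2 - (2 * μ * ⟪A v, A ξ⟫) * horth
    rcases mul_eq_zero.mp this with h0 | h0
    · linarith
    · exact absurd h0 (ne_of_gt hAvAv)
  obtain ⟨c, hcpos, hc2⟩ : ∃ c : ℝ, 0 < c ∧ μ * c ^ 2 = 1 := by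
    refine ⟨Real.sqrt μ⁻¹, Real.sqrt_pos.mpr (by positivity), ?_⟩
    rw [Real.sq_sqrt (by positivity)]
    field_simp
  have hcne : c ≠ 0 := ne_of_gt hcpos
  have hconf : ∀ x : E n, ⟪A x, A x⟫ = c ^ 2 * ⟪x, x⟫ := by
    intro x
    obtain ⟨t, ht⟩ : ∃ t : ℝ, t = ⟪x, v⟫ / ⟪v, v⟫ := ⟨_, rfl⟩
    have hperp : ⟪x - t • v, v⟫ = 0 := by
      rw [inner_sub_left, real_inner_smul_left, ht,
        div_mul_cancel₀ _ (ne_of_gt hvv), sub_self]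
    obtain ⟨ho, hn⟩ := key (x - t • v) hperp
    have hoc : ⟪A v, A (x - t • v)⟫ = 0 := by rw [real_inner_comm]; exact ho
    have hpc : ⟪v, x - t • v⟫ = 0 := by rw [real_inner_comm]; exact hperp
    have hx : A x = t • A v + A (x - t • v) := by rw [map_sub, map_smul]; abel
    have hx2 : (x : E n) = t • v + (x - t • v) := by abel
    calc ⟪A x, A x⟫ = t ^ 2 * ⟪A v, A v⟫ + ⟪A (x - t • v), A (x - t • v)⟫ := by
          rw [hx, real_inner_add_add_self]
          simp only [real_inner_smul_left, real_inner_smul_right, hoc]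
          ring
      _ = c ^ 2 * ⟪x, x⟫ := by
          conv_rhs => rw [hx2]
          rw [real_inner_add_add_self]
          simp only [real_inner_smul_left, real_inner_smul_right, hpc]
          linear_combination (-(t ^ 2 * ⟪A v, A v⟫) - ⟪A (x - t • v), A (x - t • v)⟫) * hc2
            + c ^ 2 * t ^ 2 * hμvv + c ^ 2 * hn
  have hinner : ∀ x y : E n, ⟪A x, A y⟫ = c ^ 2 * ⟪x, y⟫ := by
    intro x y
    have h1 := hconf (x + y)
    have h2 := hconf x
    have h3 := hconf y
    simp only [map_add, real_inner_add_add_self] at h1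
    linarith
  refine ⟨c, hcpos, ?_⟩
  let B : E n ≃ₗ[ℝ] E n :=
    (LinearEquiv.ofBijective A hA).trans
      (LinearEquiv.smulOfNeZero ℝ (E n) c⁻¹ (inv_ne_zero hcne))
  have hB : ∀ x, B x = c⁻¹ • A x := fun x => rfl
  have hBin : ∀ x y : E n, ⟪B x, B y⟫ = ⟪x, y⟫ := by
    intro x y
    rw [hB, hB, real_inner_smul_left, real_inner_smul_right, hinner]
    field_simp
  refine ⟨B.isometryOfInner hBin, fun x => ?_⟩
  rw [LinearEquiv.coe_isometryOfInner, hB, smul_smul, mul_inv_cancel₀ hcne, one_smul]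
end
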